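/- Let M_{ij} be a symmetric interaction matrix on a finite lattice Λ ⊂ ℤ^d with |M_{kn}| ≤ C(1+|k-n|)^{-(d+α)} for α ∈ (0,1], and suppose cov(m,n) ≥ 0 satisfies cov(m,n) ≤ C'(1+|m-n|)^{-(d+β)} for some β > 0. Define J_{mk} = Σ_{n ∉ B_L(m)} |M_{kn}| cov(m,n) for k ∈ B_L(m) and J_{mk} = Σ_{n ∈ B_L(m)} |M_{kn}| cov(m,n) for k ∉ B_L(m). Then Σ_k J_{mk} → 0 as L → ∞, uniformly in m; in particular, for L large enough (depending only on C, C', d, α, β), Σ_k J_{mk} ≤ 1/2 for all m. -/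

import Mathlib

open Classical in
/-- The auxiliary kernel `J` of the bootstrapping argument: for `k` inside the box
`B_L(m)` one sums the interaction against the covariance over sites outside the box,
and for `k` outside the box over the sites inside the box. -/
noncomputable def Jker (d : ℕ) (Λ : Finset (Fin d → ℤ))
    (M cov : (Fin d → ℤ) → (Fin d → ℤ) → ℝ) (L : ℝ) (m k : Fin d → ℤ) : ℝ :=
  if ‖k - m‖ ≤ L then
    ∑ n ∈ Λ.filter fun n => ¬ ‖n - m‖ ≤ L, |M k n| * cov m n
  else
    ∑ n ∈ Λ.filter fun n => ‖n - m‖ ≤ L, |M k n| * cov m n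

set_option maxHeartbeats 1000000

noncomputable def gker (d : ℕ) (γ : ℝ) (x : Fin d → ℤ) : ℝ :=
  (1 + ‖x‖) ^ (-((d : ℝ) + γ))

lemma gker_nonneg (d : ℕ) (γ : ℝ) (x : Fin d → ℤ) : 0 ≤ gker d γ x :=
  Real.rpow_nonneg (by positivity) _

lemma summable_one_add_abs {p : ℝ} (hp : 1 < p) :
    Summable (fun t : ℤ => (1 + |(t : ℝ)|) ^ (-p)) := by
  apply Summable.of_norm_bounded_eventually (g := fun t : ℤ => |(t : ℝ)| ^ (-p))
    (Real.summable_abs_int_rpow hp)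
  apply Filter.eventually_cofinite.mpr
  apply Set.Finite.subset (Set.finite_singleton (0 : ℤ))
  intro t ht
  simp only [Set.mem_setOf_eq, not_le] at ht
  by_contra h0
  apply absurd ?_ (not_le.mpr ht)
  have h1 : (0:ℝ) < |(t:ℝ)| := by
    simp only [Set.mem_singleton_iff] at h0
    have : (t:ℝ) ≠ 0 := Int.cast_ne_zero.mpr h0
    positivity
  rw [Real.norm_eq_abs, abs_of_nonneg (Real.rpow_nonneg (by positivity) _)]
  exact Real.rpow_le_rpow_of_nonpos h1 (by linarith [abs_nonneg (t:ℝ)]) (by linarith)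

lemma summable_pi_prod (d : ℕ) (v : ℤ → ℝ) (hv : ∀ t, 0 ≤ v t) (hs : Summable v) :
    Summable (fun n : Fin d → ℤ => ∏ i, v (n i)) := by
  induction d with
  | zero =>
      exact Summable.of_finite
  | succ d ih =>
      have hv' : (0 : ℤ → ℝ) ≤ v := fun t => hv t
      have hw' : (0 : (Fin d → ℤ) → ℝ) ≤ fun n : Fin d → ℤ => ∏ i, v (n i) :=
        fun n => Finset.prod_nonneg fun i _ => hv _
      have key : ∀ w : (Fin d → ℤ) → ℝ, Summable w → (0:(Fin d → ℤ) → ℝ) ≤ w →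
          Summable (fun q : ℤ × (Fin d → ℤ) => v q.1 * w q.2) :=
        fun w hw1 hw0 => Summable.mul_of_nonneg hs hw1 hv' hw0
      have h2 : Summable (fun q : ℤ × (Fin d → ℤ) => v q.1 * ∏ i, v (q.2 i)) :=
        key (fun n : Fin d → ℤ => ∏ i, v (n i)) ih hw'
      rw [← (Fin.consEquiv (fun _ : Fin (d+1) => ℤ)).summable_iff]
      apply h2.congr
      intro q
      simp only [Function.comp_apply, Fin.consEquiv_apply]
      rw [Fin.prod_univ_succ]
      simp

lemma summable_gker (d : ℕ) (hd : 1 ≤ d) {γ : ℝ} (hγ : 0 < γ) :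
    Summable (gker d γ) := by
  set p : ℝ := ((d : ℝ) + γ) / d with hpdef
  have hd0 : (0:ℝ) < d := by exact_mod_cast hd
  have hp : 1 < p := by
    rw [hpdef, lt_div_iff₀ hd0]; linarith
  have h1 : Summable (fun t : ℤ => (1 + |(t : ℝ)|) ^ (-p)) := summable_one_add_abs hp
  have h2 := summable_pi_prod d _ (fun t => Real.rpow_nonneg (by positivity) _) h1
  apply Summable.of_nonneg_of_le (gker_nonneg d γ) _ h2
  intro n
  have hnorm : (0:ℝ) < 1 + ‖n‖ := by positivity
  have hfac : ∀ i : Fin d, (0:ℝ) < 1 + |((n i : ℤ) : ℝ)| := fun i => by positivity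
  have hprodpos : (0:ℝ) < ∏ i, (1 + |((n i : ℤ) : ℝ)|) :=
    Finset.prod_pos (fun i _ => hfac i)
  have hle : ∏ i, (1 + |((n i : ℤ) : ℝ)|) ≤ (1 + ‖n‖) ^ (d : ℕ) := by
    calc ∏ i, (1 + |((n i : ℤ) : ℝ)|) ≤ ∏ _i : Fin d, (1 + ‖n‖) := by
          apply Finset.prod_le_prod (fun i _ => le_of_lt (hfac i))
          intro i _
          have h := norm_le_pi_norm n i
          have h' : |((n i : ℤ) : ℝ)| ≤ ‖n‖ := by rw [← Int.norm_eq_abs]; exact h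
          linarith
      _ = (1 + ‖n‖) ^ (d : ℕ) := by simp
  have key : gker d γ n ≤ (∏ i, (1 + |((n i : ℤ) : ℝ)|)) ^ (-p) := by
    have h3 : ((1 + ‖n‖) ^ (d : ℕ)) ^ (-p) ≤ (∏ i, (1 + |((n i : ℤ) : ℝ)|)) ^ (-p) :=
      Real.rpow_le_rpow_of_nonpos hprodpos hle (by linarith)
    have h4 : ((1 + ‖n‖) ^ (d : ℕ)) ^ (-p) = gker d γ n := by
      rw [← Real.rpow_natCast (1 + ‖n‖) d, ← Real.rpow_mul (le_of_lt hnorm)]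
      unfold gker
      congr 1
      have := hd0.ne'
      rw [hpdef]
      field_simp
    linarith [h3, h4.symm.le]
  calc gker d γ n ≤ (∏ i, (1 + |((n i : ℤ) : ℝ)|)) ^ (-p) := key
    _ = ∏ i, (1 + |((n i : ℤ) : ℝ)|) ^ (-p) :=
        (Real.finset_prod_rpow _ _ (fun i _ => (hfac i).le) _).symm

lemma sum_gker_le (d : ℕ) (hd : 1 ≤ d) {γ : ℝ} (hγ : 0 < γ)
    (S : Finset (Fin d → ℤ)) (m : Fin d → ℤ) :
    ∑ k ∈ S, gker d γ (k - m) ≤ ∑' x, gker d γ x := by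
  have h : ∑ k ∈ S, gker d γ (k - m) = ∑ x ∈ S.image (· - m), gker d γ x := by
    rw [Finset.sum_image]
    intro a _ b _ hab
    simpa using sub_left_injective hab
  rw [h]
  exact Summable.sum_le_tsum _ (fun x _ => gker_nonneg d γ x) (summable_gker d hd hγ)

lemma tail_gker (d : ℕ) (hd : 1 ≤ d) {γ : ℝ} (hγ : 0 < γ) {ε : ℝ} (hε : 0 < ε) :
    ∃ L₀ : ℝ, 0 ≤ L₀ ∧ ∀ L, L₀ ≤ L → ∀ (S : Finset (Fin d → ℤ)) (m : Fin d → ℤ),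
      (∀ x ∈ S, L < ‖x - m‖) → ∑ x ∈ S, gker d γ (x - m) ≤ ε := by
  have hsum := summable_gker d hd hγ
  obtain ⟨s, hs⟩ := summable_iff_vanishing.mp hsum (Metric.ball 0 ε) (Metric.ball_mem_nhds 0 hε)
  obtain ⟨L₁, hL₁⟩ := (s.image (fun x => ‖x‖)).exists_le
  refine ⟨max L₁ 0, le_max_right _ _, ?_⟩
  intro L hL S m hSm
  have key : ∑ x ∈ S.image (· - m), gker d γ x ∈ Metric.ball (0:ℝ) ε := by
    apply hs
    rw [Finset.disjoint_left]
    intro a ha has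
    obtain ⟨x, hx, rfl⟩ := Finset.mem_image.mp ha
    have h1 : ‖x - m‖ ≤ L₁ := hL₁ _ (Finset.mem_image_of_mem _ has)
    have h2 := hSm x hx
    have : L₁ ≤ L := le_trans (le_max_left _ _) hL
    linarith
  have heq : ∑ x ∈ S, gker d γ (x - m) = ∑ x ∈ S.image (· - m), gker d γ x := by
    rw [Finset.sum_image]
    intro a _ b _ hab
    simpa using sub_left_injective hab
  rw [heq]
  rw [Metric.mem_ball, Real.dist_eq, sub_zero] at key
  exact le_of_lt (lt_of_le_of_lt (le_abs_self _) key)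

lemma Jker_sum_le (d : ℕ) (hd : 1 ≤ d) (α β C C' : ℝ)
    (hα : 0 < α) (hβ : 0 < β) (hC : 0 < C) (hC' : 0 < C') :
    ∀ ε : ℝ, 0 < ε → ∃ L₀ : ℝ, ∀ L : ℝ, L₀ ≤ L →
      ∀ (Λ : Finset (Fin d → ℤ)) (M cov : (Fin d → ℤ) → (Fin d → ℤ) → ℝ),
        (∀ k n, M k n = M n k) →
        (∀ k n, |M k n| ≤ C * (1 + ‖k - n‖) ^ (-((d : ℝ) + α))) →
        (∀ m n, 0 ≤ cov m n) →
        (∀ m n, cov m n ≤ C' * (1 + ‖m - n‖) ^ (-((d : ℝ) + β))) →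
        ∀ m ∈ Λ, ∑ k ∈ Λ, Jker d Λ M cov L m k ≤ ε := by
  intro ε hε
  classical
  set Sa := ∑' x, gker d α x with hSa
  set Sb := ∑' x, gker d β x with hSb
  have hSa0 : 0 ≤ Sa := tsum_nonneg (gker_nonneg d α)
  have hSb0 : 0 ≤ Sb := tsum_nonneg (gker_nonneg d β)
  set X := C * C' * (Sa + Sb) with hX
  have hX0 : 0 ≤ X := by positivity
  set δ := ε / (3 * (X + 1)) with hδdef
  have hδ : 0 < δ := by
    apply div_pos hε; positivity
  obtain ⟨La, hLa0, hLa⟩ := tail_gker d hd hα hδ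
  obtain ⟨Lb, hLb0, hLb⟩ := tail_gker d hd hβ hδ
  refine ⟨2 * max La Lb, ?_⟩
  intro L hL Λ M cov hMsymm hM hcov0 hcov m hm
  have hLa2 : La ≤ L / 2 := by
    have := le_max_left La Lb; linarith
  have hLb2 : Lb ≤ L / 2 := by
    have := le_max_right La Lb; linarith
  have hL0 : 0 ≤ L := by
    have h1 : (0:ℝ) ≤ max La Lb := le_trans hLa0 (le_max_left _ _)
    linarith
  have hLbL : Lb ≤ L := by linarith
  have hMg : ∀ k n, |M k n| ≤ C * gker d α (k - n) := fun k n => hM k n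
  have hcovg : ∀ n, cov m n ≤ C' * gker d β (n - m) := by
    intro n
    have h := hcov m n
    unfold gker
    rwa [norm_sub_rev n m]
  -- split the sum
  have hsplit : ∑ k ∈ Λ, Jker d Λ M cov L m k
      = (∑ k ∈ Λ.filter fun k => ‖k - m‖ ≤ L,
          ∑ n ∈ Λ.filter fun n => ¬ ‖n - m‖ ≤ L, |M k n| * cov m n)
        + ∑ k ∈ Λ.filter fun k => ¬ ‖k - m‖ ≤ L,
          ∑ n ∈ Λ.filter fun n => ‖n - m‖ ≤ L, |M k n| * cov m n := by
    rw [← Finset.sum_filter_add_sum_filter_not Λ (fun k => ‖k - m‖ ≤ L) (Jker d Λ M cov L m)]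
    congr 1
    · apply Finset.sum_congr rfl
      intro k hk
      rw [Finset.mem_filter] at hk
      simp only [Jker]
      rw [if_pos hk.2]
    · apply Finset.sum_congr rfl
      intro k hk
      rw [Finset.mem_filter] at hk
      simp only [Jker]
      rw [if_neg hk.2]
  rw [hsplit]
  -- generic bound: for sets S T, if inner-sum over S is small
  have hCSa : C * Sa * C' ≤ X + 1 := by
    have h := mul_nonneg (mul_nonneg hC.le hC'.le) hSb0
    have h2 : C * Sa * C' = C * C' * Sa := by ring
    rw [h2, hX]; nlinarith
  have hCSb : C * C' * Sb ≤ X + 1 := by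
    have h := mul_nonneg (mul_nonneg hC.le hC'.le) hSa0
    rw [hX]; nlinarith
  have hXδ : (X + 1) * δ = ε / 3 := by
    rw [hδdef]
    have : X + 1 ≠ 0 := by positivity
    field_simp
  -- Term A
  have hA : (∑ k ∈ Λ.filter fun k => ‖k - m‖ ≤ L,
        ∑ n ∈ Λ.filter fun n => ¬ ‖n - m‖ ≤ L, |M k n| * cov m n) ≤ ε / 3 := by
    rw [Finset.sum_comm]
    have h1 : ∀ n ∈ Λ.filter fun n => ¬ ‖n - m‖ ≤ L,
        (∑ k ∈ Λ.filter fun k => ‖k - m‖ ≤ L, |M k n| * cov m n)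
          ≤ (C * Sa) * (C' * gker d β (n - m)) := by
      intro n hn
      rw [← Finset.sum_mul]
      apply mul_le_mul _ (hcovg n) (hcov0 m n) (by positivity)
      calc ∑ k ∈ Λ.filter fun k => ‖k - m‖ ≤ L, |M k n|
          ≤ ∑ k ∈ Λ.filter fun k => ‖k - m‖ ≤ L, C * gker d α (k - n) :=
            Finset.sum_le_sum (fun k _ => hMg k n)
        _ = C * ∑ k ∈ Λ.filter fun k => ‖k - m‖ ≤ L, gker d α (k - n) := by
            rw [Finset.mul_sum]
        _ ≤ C * Sa := mul_le_mul_of_nonneg_left (sum_gker_le d hd hα _ n) hC.le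
    calc (∑ n ∈ Λ.filter fun n => ¬ ‖n - m‖ ≤ L,
          ∑ k ∈ Λ.filter fun k => ‖k - m‖ ≤ L, |M k n| * cov m n)
        ≤ ∑ n ∈ Λ.filter fun n => ¬ ‖n - m‖ ≤ L, (C * Sa) * (C' * gker d β (n - m)) :=
          Finset.sum_le_sum h1
      _ = (C * Sa * C') * ∑ n ∈ Λ.filter fun n => ¬ ‖n - m‖ ≤ L, gker d β (n - m) := by
          rw [Finset.mul_sum]
          apply Finset.sum_congr rfl
          intros; ring
      _ ≤ (C * Sa * C') * δ := by
          apply mul_le_mul_of_nonneg_left _ (by positivity)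
          apply hLb L hLbL _ m
          intro x hx
          rw [Finset.mem_filter] at hx
          exact not_le.mp hx.2
      _ ≤ (X + 1) * δ := mul_le_mul_of_nonneg_right hCSa hδ.le
      _ = ε / 3 := hXδ
  -- Term B
  have hB : (∑ k ∈ Λ.filter fun k => ¬ ‖k - m‖ ≤ L,
        ∑ n ∈ Λ.filter fun n => ‖n - m‖ ≤ L, |M k n| * cov m n) ≤ ε / 3 + ε / 3 := by
    rw [Finset.sum_comm]
    rw [← Finset.sum_filter_add_sum_filter_not (Λ.filter fun n => ‖n - m‖ ≤ L)
      (fun n => ‖n - m‖ ≤ L / 2)]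
    have hB1 : (∑ n ∈ (Λ.filter fun n => ‖n - m‖ ≤ L).filter fun n => ‖n - m‖ ≤ L / 2,
        ∑ k ∈ Λ.filter fun k => ¬ ‖k - m‖ ≤ L, |M k n| * cov m n) ≤ ε / 3 := by
      have h1 : ∀ n ∈ (Λ.filter fun n => ‖n - m‖ ≤ L).filter fun n => ‖n - m‖ ≤ L / 2,
          (∑ k ∈ Λ.filter fun k => ¬ ‖k - m‖ ≤ L, |M k n| * cov m n)
            ≤ (C * δ) * (C' * gker d β (n - m)) := by
        intro n hn
        rw [Finset.mem_filter] at hn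
        rw [← Finset.sum_mul]
        apply mul_le_mul _ (hcovg n) (hcov0 m n) (by positivity)
        calc ∑ k ∈ Λ.filter fun k => ¬ ‖k - m‖ ≤ L, |M k n|
            ≤ ∑ k ∈ Λ.filter fun k => ¬ ‖k - m‖ ≤ L, C * gker d α (k - n) :=
              Finset.sum_le_sum (fun k _ => hMg k n)
          _ = C * ∑ k ∈ Λ.filter fun k => ¬ ‖k - m‖ ≤ L, gker d α (k - n) := by
              rw [Finset.mul_sum]
          _ ≤ C * δ := by
              apply mul_le_mul_of_nonneg_left _ hC.le
              apply hLa (L / 2) hLa2 _ n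
              intro k hk
              rw [Finset.mem_filter] at hk
              have h2 : L < ‖k - m‖ := not_le.mp hk.2
              have h3 : ‖k - m‖ ≤ ‖k - n‖ + ‖n - m‖ := by
                have h4 := norm_add_le (k - n) (n - m)
                rwa [sub_add_sub_cancel] at h4
              have h5 : ‖n - m‖ ≤ L / 2 := hn.2
              linarith
      calc (∑ n ∈ (Λ.filter fun n => ‖n - m‖ ≤ L).filter fun n => ‖n - m‖ ≤ L / 2,
            ∑ k ∈ Λ.filter fun k => ¬ ‖k - m‖ ≤ L, |M k n| * cov m n)
          ≤ ∑ n ∈ (Λ.filter fun n => ‖n - m‖ ≤ L).filter fun n => ‖n - m‖ ≤ L / 2,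
              (C * δ) * (C' * gker d β (n - m)) := Finset.sum_le_sum h1
        _ = (C * C' * δ) * ∑ n ∈ (Λ.filter fun n => ‖n - m‖ ≤ L).filter
              fun n => ‖n - m‖ ≤ L / 2, gker d β (n - m) := by
            rw [Finset.mul_sum]
            apply Finset.sum_congr rfl
            intros; ring
        _ ≤ (C * C' * δ) * Sb := by
            apply mul_le_mul_of_nonneg_left (sum_gker_le d hd hβ _ m) (by positivity)
        _ = (C * C' * Sb) * δ := by ring
        _ ≤ (X + 1) * δ := mul_le_mul_of_nonneg_right hCSb hδ.le
        _ = ε / 3 := hXδ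
    have hB2 : (∑ n ∈ (Λ.filter fun n => ‖n - m‖ ≤ L).filter fun n => ¬ ‖n - m‖ ≤ L / 2,
        ∑ k ∈ Λ.filter fun k => ¬ ‖k - m‖ ≤ L, |M k n| * cov m n) ≤ ε / 3 := by
      have h1 : ∀ n ∈ (Λ.filter fun n => ‖n - m‖ ≤ L).filter fun n => ¬ ‖n - m‖ ≤ L / 2,
          (∑ k ∈ Λ.filter fun k => ¬ ‖k - m‖ ≤ L, |M k n| * cov m n)
            ≤ (C * Sa) * (C' * gker d β (n - m)) := by
        intro n hn
        rw [← Finset.sum_mul]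
        apply mul_le_mul _ (hcovg n) (hcov0 m n) (by positivity)
        calc ∑ k ∈ Λ.filter fun k => ¬ ‖k - m‖ ≤ L, |M k n|
            ≤ ∑ k ∈ Λ.filter fun k => ¬ ‖k - m‖ ≤ L, C * gker d α (k - n) :=
              Finset.sum_le_sum (fun k _ => hMg k n)
          _ = C * ∑ k ∈ Λ.filter fun k => ¬ ‖k - m‖ ≤ L, gker d α (k - n) := by
              rw [Finset.mul_sum]
          _ ≤ C * Sa := mul_le_mul_of_nonneg_left (sum_gker_le d hd hα _ n) hC.le
      calc (∑ n ∈ (Λ.filter fun n => ‖n - m‖ ≤ L).filter fun n => ¬ ‖n - m‖ ≤ L / 2,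
            ∑ k ∈ Λ.filter fun k => ¬ ‖k - m‖ ≤ L, |M k n| * cov m n)
          ≤ ∑ n ∈ (Λ.filter fun n => ‖n - m‖ ≤ L).filter fun n => ¬ ‖n - m‖ ≤ L / 2,
              (C * Sa) * (C' * gker d β (n - m)) := Finset.sum_le_sum h1
        _ = (C * Sa * C') * ∑ n ∈ (Λ.filter fun n => ‖n - m‖ ≤ L).filter
              fun n => ¬ ‖n - m‖ ≤ L / 2, gker d β (n - m) := by
            rw [Finset.mul_sum]
            apply Finset.sum_congr rfl
            intros; ring
        _ ≤ (C * Sa * C') * δ := by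
            apply mul_le_mul_of_nonneg_left _ (by positivity)
            apply hLb (L / 2) hLb2 _ m
            intro x hx
            rw [Finset.mem_filter, Finset.mem_filter] at hx
            exact not_le.mp hx.2
        _ ≤ (X + 1) * δ := mul_le_mul_of_nonneg_right hCSa hδ.le
        _ = ε / 3 := hXδ
    linarith
  linarith


theorem Jker_small (d : ℕ) (hd : 1 ≤ d) (α β C C' : ℝ)
    (hα : 0 < α) (hα1 : α ≤ 1) (hβ : 0 < β) (hC : 0 < C) (hC' : 0 < C') :
    (∀ ε : ℝ, 0 < ε → ∃ L₀ : ℝ, ∀ L : ℝ, L₀ ≤ L →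
      ∀ (Λ : Finset (Fin d → ℤ)) (M cov : (Fin d → ℤ) → (Fin d → ℤ) → ℝ),
        (∀ k n, M k n = M n k) →
        (∀ k n, |M k n| ≤ C * (1 + ‖k - n‖) ^ (-((d : ℝ) + α))) →
        (∀ m n, 0 ≤ cov m n) →
        (∀ m n, cov m n ≤ C' * (1 + ‖m - n‖) ^ (-((d : ℝ) + β))) →
        ∀ m ∈ Λ, ∑ k ∈ Λ, Jker d Λ M cov L m k ≤ ε) ∧
    (∃ L₀ : ℝ, ∀ L : ℝ, L₀ ≤ L →
      ∀ (Λ : Finset (Fin d → ℤ)) (M cov : (Fin d → ℤ) → (Fin d → ℤ) → ℝ),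
        (∀ k n, M k n = M n k) →
        (∀ k n, |M k n| ≤ C * (1 + ‖k - n‖) ^ (-((d : ℝ) + α))) →
        (∀ m n, 0 ≤ cov m n) →
        (∀ m n, cov m n ≤ C' * (1 + ‖m - n‖) ^ (-((d : ℝ) + β))) →
        ∀ m ∈ Λ, ∑ k ∈ Λ, Jker d Λ M cov L m k ≤ 1 / 2) := by
  have main := Jker_sum_le d hd α β C C' hα hβ hC hC'
  exact ⟨main, main (1 / 2) (by norm_num)⟩
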